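/- arXiv:2305.05063 — 2 statements merged into one kernel-verified Lean document; each statement's English description precedes it below -/
import Mathlib

section
/- With A as in the previous construction (A = ∑_{i≤m} q^{−m}(1−q^{−N+2m}) e_ii + ∑_{m<i≤N−m} q^{−m} e_ii + skew-diagonal entries y_i e_{i,i'} for i ≤ m or i ≥ N+1−m with y_i y_{i'} = q^{−N}), the matrix A satisfies the quadratic minimal-polynomial identity (A + q^{−(N−m)})(A − q^{−m}) = 0. -/
open Matrix

/-- The quantum point of type T2:
`A = ∑_{i≤m} q^{−m}(1−q^{−N+2m}) e_ii + ∑_{m<i≤N−m} q^{−m} e_ii + ∑_{i≤m ∨ i≥N+1−m} y_i e_{i,i'}`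
(0-based indices, `i' = N+1−i` in 1-based indexing). -/
noncomputable def Amat (N m : ℕ) (q : ℂ) (y : Fin N → ℂ) : Matrix (Fin N) (Fin N) ℂ :=
  Matrix.of fun i j =>
    (if i = j then
        (if (i : ℕ) < m then q ^ (-(m : ℤ)) * (1 - q ^ (2 * (m : ℤ) - (N : ℤ)))
         else if (i : ℕ) + m < N then q ^ (-(m : ℤ)) else 0)
      else 0) +
    (if ((i : ℕ) < m ∨ N ≤ (i : ℕ) + m) ∧ (i : ℕ) + (j : ℕ) + 1 = N then y i else 0)

lemma Amat_diag₁ {N m : ℕ} {q : ℂ} {y : Fin N → ℂ} {i : Fin N}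
    (h : (i : ℕ) < m) (h2 : 2 * m ≤ N) :
    Amat N m q y i i = q ^ (-(m : ℤ)) * (1 - q ^ (2 * (m : ℤ) - (N : ℤ))) := by
  have hi := i.isLt
  simp only [Amat, Matrix.of_apply, if_pos rfl, if_pos h]
  rw [if_neg (by omega : ¬(((i:ℕ) < m ∨ N ≤ (i:ℕ) + m) ∧ (i:ℕ) + (i:ℕ) + 1 = N)), add_zero]
  simp

lemma Amat_diag₂ {N m : ℕ} {q : ℂ} {y : Fin N → ℂ} {i : Fin N}
    (h1 : m ≤ (i : ℕ)) (h2 : (i : ℕ) + m < N) :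
    Amat N m q y i i = q ^ (-(m : ℤ)) := by
  simp only [Amat, Matrix.of_apply, if_pos rfl]
  rw [if_neg (by omega : ¬ (i:ℕ) < m), if_pos h2,
    if_neg (by omega : ¬(((i:ℕ) < m ∨ N ≤ (i:ℕ) + m) ∧ (i:ℕ) + (i:ℕ) + 1 = N)), add_zero]
  simp

lemma Amat_diag₃ {N m : ℕ} {q : ℂ} {y : Fin N → ℂ} {i : Fin N}
    (h : N ≤ (i : ℕ) + m) (h2 : 2 * m ≤ N) (hm : 1 ≤ m) :
    Amat N m q y i i = 0 := by
  simp only [Amat, Matrix.of_apply, if_pos rfl]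
  rw [if_neg (by omega : ¬ (i:ℕ) < m), if_neg (by omega : ¬ (i:ℕ) + m < N),
    if_neg (by omega : ¬(((i:ℕ) < m ∨ N ≤ (i:ℕ) + m) ∧ (i:ℕ) + (i:ℕ) + 1 = N)), add_zero]
  simp

lemma Amat_skew {N m : ℕ} {q : ℂ} {y : Fin N → ℂ} {i j : Fin N}
    (hc : (i : ℕ) < m ∨ N ≤ (i : ℕ) + m) (hij : (i : ℕ) + (j : ℕ) + 1 = N)
    (h2 : 2 * m ≤ N) :
    Amat N m q y i j = y i := by
  have hne : i ≠ j := by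
    intro h; subst h; omega
  simp only [Amat, Matrix.of_apply, if_neg hne, if_pos (⟨hc, hij⟩ :
    ((i:ℕ) < m ∨ N ≤ (i:ℕ) + m) ∧ (i:ℕ) + (j:ℕ) + 1 = N), zero_add]

lemma Amat_off {N m : ℕ} {q : ℂ} {y : Fin N → ℂ} {i j : Fin N}
    (hne : i ≠ j) (hij : (i : ℕ) + (j : ℕ) + 1 ≠ N) :
    Amat N m q y i j = 0 := by
  simp only [Amat, Matrix.of_apply, if_neg hne]
  rw [if_neg (fun h => hij h.2), add_zero]

lemma Amat_off₂ {N m : ℕ} {q : ℂ} {y : Fin N → ℂ} {i j : Fin N}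
    (h1 : m ≤ (i : ℕ)) (h2 : (i : ℕ) + m < N) (hne : i ≠ j) :
    Amat N m q y i j = 0 := by
  simp only [Amat, Matrix.of_apply, if_neg hne]
  rw [if_neg (by omega : ¬(((i:ℕ) < m ∨ N ≤ (i:ℕ) + m) ∧ (i:ℕ) + (j:ℕ) + 1 = N)), add_zero]

/-- The minimal polynomial identity `(A + q^{−(N−m)})(A − q^{−m}) = 0`. -/
theorem minimal_polynomial_T2 (N m : ℕ) (q : ℂ) (hq : q ≠ 0)
    (hq1 : ∀ k : ℕ, k ≠ 0 → q ^ k ≠ 1)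
    (hm : 1 ≤ m) (hm2 : 2 * m ≤ N) (y : Fin N → ℂ)
    (hy : ∀ i j : Fin N, (i : ℕ) < m → (i : ℕ) + (j : ℕ) + 1 = N →
      y i * y j = q ^ (-(N : ℤ))) :
    (Amat N m q y + q ^ (-((N : ℤ) - (m : ℤ))) • (1 : Matrix (Fin N) (Fin N) ℂ)) *
      (Amat N m q y - q ^ (-(m : ℤ)) • (1 : Matrix (Fin N) (Fin N) ℂ)) = 0 := by
  have hc : q ^ (-((N:ℤ) - (m:ℤ))) * q ^ (-(m:ℤ)) = q ^ (-(N:ℤ)) := by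
    rw [← zpow_add₀ hq]; congr 1; ring
  have hα : q ^ (-(m:ℤ)) * q ^ (2 * (m:ℤ) - (N:ℤ)) = q ^ (-((N:ℤ) - (m:ℤ))) := by
    rw [← zpow_add₀ hq]; congr 1; ring
  ext i j
  have hiN := i.isLt
  have hjN := j.isLt
  obtain ⟨i', hvi'⟩ : ∃ i' : Fin N, (i' : ℕ) = N - 1 - (i : ℕ) :=
    ⟨⟨N - 1 - (i : ℕ), by omega⟩, rfl⟩
  have hii' : (i : ℕ) + (i' : ℕ) + 1 = N := by omega
  rw [Matrix.mul_apply, Matrix.zero_apply]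
  simp only [Matrix.add_apply, Matrix.sub_apply, Matrix.smul_apply, Matrix.one_apply,
    smul_eq_mul, mul_ite, mul_one, mul_zero]
  have hz : ∀ k ∈ (Finset.univ : Finset (Fin N)), k ∉ ({i, i'} : Finset (Fin N)) →
      (Amat N m q y i k + (if i = k then q ^ (-((N:ℤ) - (m:ℤ))) else 0)) *
      (Amat N m q y k j - (if k = j then q ^ (-(m:ℤ)) else 0)) = 0 := by
    intro k _ hk
    simp only [Finset.mem_insert, Finset.mem_singleton, not_or] at hk
    have hne : i ≠ k := fun h => hk.1 h.symm
    have hsum : (i : ℕ) + (k : ℕ) + 1 ≠ N := by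
      intro h
      exact hk.2 (Fin.ext (by omega))
    rw [Amat_off hne hsum, if_neg hne, add_zero, zero_mul]
  rw [← Finset.sum_subset (Finset.subset_univ ({i, i'} : Finset (Fin N))) hz]
  by_cases hmid : i = i'
  · have h2i : 2 * (i : ℕ) + 1 = N := by
      have := congrArg Fin.val hmid; omega
    have hpair : ({i, i'} : Finset (Fin N)) = {i} := by rw [← hmid]; simp
    rw [hpair, Finset.sum_singleton, if_pos rfl]
    rw [Amat_diag₂ (by omega) (by omega)]
    by_cases hji : i = j
    · rw [if_pos hji, ← hji, Amat_diag₂ (by omega) (by omega), sub_self, mul_zero]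
    · rw [if_neg hji, Amat_off hji (by intro h; exact hji (Fin.ext (by omega))),
        sub_zero, mul_zero]
  · rw [Finset.sum_pair hmid, if_pos rfl, if_neg hmid, add_zero]
    have hvi : (i : ℕ) ≠ (i' : ℕ) := fun h => hmid (Fin.ext h)
    rcases lt_or_ge (i : ℕ) m with h1 | h1
    · -- i < m
      have hAii := Amat_diag₁ (y := y) (q := q) h1 hm2
      have hAii' : Amat N m q y i i' = y i := Amat_skew (Or.inl h1) hii' hm2
      have hspec' : N ≤ (i' : ℕ) + m := by omega
      have hAi'i' : Amat N m q y i' i' = 0 := Amat_diag₃ hspec' hm2 hm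
      by_cases hji : j = i
      · subst hji
        rw [if_pos rfl, if_neg (fun h => hmid h.symm), sub_zero, hAii, hAii',
          Amat_skew (Or.inr hspec') (by omega) hm2]
        have hyy := hy j i' h1 hii'
        linear_combination (q ^ (-(m:ℤ)) * q ^ (2 * (m:ℤ) - (N:ℤ)) - q ^ (-(m:ℤ))) * hα
          - hc + hyy
      · by_cases hji' : j = i'
        · subst hji'
          rw [if_neg (fun h => hji (h.symm)), if_pos rfl, hAii, hAii', hAi'i', zero_sub]
          linear_combination (-(y i)) * hα
        · rw [if_neg (fun h => hji h.symm), if_neg (fun h => hji' h.symm), sub_zero,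
            sub_zero, Amat_off (fun h => hji h.symm) (fun h => hji' (Fin.ext (by omega))),
            Amat_off (fun h => hji' h.symm) (fun h => hji (Fin.ext (by omega))),
            mul_zero, mul_zero, add_zero]
    · rcases lt_or_ge ((i : ℕ) + m) N with h2 | h2
      · -- middle band
        rw [Amat_off₂ h1 h2 hmid, zero_mul, add_zero, Amat_diag₂ h1 h2]
        by_cases hji : j = i
        · subst hji; rw [if_pos rfl, Amat_diag₂ h1 h2, sub_self, mul_zero]
        · rw [if_neg (fun h => hji h.symm), sub_zero,
            Amat_off₂ h1 h2 (fun h => hji h.symm), mul_zero]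
      · -- N ≤ i + m
        have hAii : Amat N m q y i i = 0 := Amat_diag₃ h2 hm2 hm
        have hAii' : Amat N m q y i i' = y i := Amat_skew (Or.inr h2) hii' hm2
        have hi'm : (i' : ℕ) < m := by omega
        have hAi'i' := Amat_diag₁ (y := y) (q := q) hi'm hm2
        by_cases hji : j = i
        · subst hji
          rw [if_pos rfl, if_neg (fun h => hmid h.symm), sub_zero, hAii, hAii',
            Amat_skew (Or.inl hi'm) (by omega) hm2, zero_add, zero_sub]
          have hyy := hy i' j hi'm (by omega)
          linear_combination hyy - hc
        · by_cases hji' : j = i'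
          · subst hji'
            rw [if_neg (fun h => hji h.symm), if_pos rfl, hAii, hAii', hAi'i', zero_add,
              sub_zero]
            linear_combination (-(y i)) * hα
          · rw [if_neg (fun h => hji h.symm), if_neg (fun h => hji' h.symm), sub_zero,
              sub_zero, Amat_off (fun h => hji h.symm) (fun h => hji' (Fin.ext (by omega))),
              Amat_off (fun h => hji' h.symm) (fun h => hji (Fin.ext (by omega))),
              mul_zero, mul_zero, add_zero]
end

section
/- Let N be even and define A₀ = ∑_{odd i ≤ N−1} z_i·(e_{i, i'−1} − e_{i+1, i'}) ∈ End(ℂ^N), where i' = N+1−i and z_i z_{i'−1} = −1 for all odd i. Then A₀² = −1. -/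
open Matrix

/-- The classical point `A₀ = ∑_{odd i ≤ N−1} z_i (e_{i,i'−1} − e_{i+1,i'})`, `i' = N+1−i`,
written with 0-based row index `a`: for `a` even the 1-based row is `i = a+1` and the entry
`z_{a+1}` sits in the 0-based column `b` with `a + b + 2 = N`; for `a` odd the 1-based row is
`i+1 = a+1` (so `i = a`) and the entry `−z_a` sits in the 0-based column `b` with `a + b = N`. -/
noncomputable def A0mat (N : ℕ) (z : ℕ → ℂ) : Matrix (Fin N) (Fin N) ℂ :=
  Matrix.of fun a b =>
    if (a : ℕ) % 2 = 0 ∧ (a : ℕ) + (b : ℕ) + 2 = N then z ((a : ℕ) + 1)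
    else if (a : ℕ) % 2 = 1 ∧ (a : ℕ) + (b : ℕ) = N then -z (a : ℕ)
    else 0

/-- For even `N` and `z_i z_{N−i} = −1` (odd `i`), the classical point of the `O(N)` class
of type T4 satisfies `A₀² = −1`. -/
theorem classical_point_T4_orthogonal (N : ℕ) (hN : Even N) (z : ℕ → ℂ)
    (hz : ∀ i j : ℕ, i % 2 = 1 → i + j = N → z i * z j = -1) :
    A0mat N z * A0mat N z = -1 := by
  have hN2 : N % 2 = 0 := Nat.even_iff.mp hN
  ext a c
  rw [Matrix.mul_apply, Matrix.neg_apply, Matrix.one_apply]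
  have haN : (a : ℕ) < N := a.isLt
  have hcN : (c : ℕ) < N := c.isLt
  rcases Nat.even_or_odd (a : ℕ) with ha | ha
  · have ha2 : (a : ℕ) % 2 = 0 := Nat.even_iff.mp ha
    have hle : (a : ℕ) + 2 ≤ N := by omega
    set b₀ : Fin N := ⟨N - 2 - (a : ℕ), by omega⟩ with hb₀
    have hb0v : (b₀ : ℕ) = N - 2 - (a : ℕ) := rfl
    have hsum : ∑ b, A0mat N z a b * A0mat N z b c
        = A0mat N z a b₀ * A0mat N z b₀ c := by
      refine Finset.sum_eq_single_of_mem b₀ (Finset.mem_univ _) (fun b _ hb => ?_)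
      have h1 : ¬((a : ℕ) % 2 = 0 ∧ (a : ℕ) + (b : ℕ) + 2 = N) := by
        rintro ⟨_, h⟩
        exact hb (Fin.ext (by omega : (b : ℕ) = (b₀ : ℕ)))
      have h2 : ¬((a : ℕ) % 2 = 1 ∧ (a : ℕ) + (b : ℕ) = N) := by omega
      simp only [A0mat, Matrix.of_apply]
      rw [if_neg h1, if_neg h2, zero_mul]
    rw [hsum]
    simp only [A0mat, Matrix.of_apply]
    have h1 : (a : ℕ) % 2 = 0 ∧ (a : ℕ) + (b₀ : ℕ) + 2 = N := ⟨ha2, by omega⟩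
    rw [if_pos h1]
    have hb2 : (b₀ : ℕ) % 2 = 0 := by omega
    by_cases hac : a = c
    · subst hac
      have h2 : (b₀ : ℕ) % 2 = 0 ∧ (b₀ : ℕ) + (a : ℕ) + 2 = N := ⟨hb2, by omega⟩
      rw [if_pos h2, if_pos rfl]
      have := hz ((a : ℕ) + 1) ((b₀ : ℕ) + 1) (by omega) (by omega)
      simpa using this
    · have hacn : (a : ℕ) ≠ (c : ℕ) := fun h => hac (Fin.ext h)
      have h2 : ¬((b₀ : ℕ) % 2 = 0 ∧ (b₀ : ℕ) + (c : ℕ) + 2 = N) := by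
        rintro ⟨_, h⟩; exact hacn (by omega)
      have h3 : ¬((b₀ : ℕ) % 2 = 1 ∧ (b₀ : ℕ) + (c : ℕ) = N) := by omega
      rw [if_neg h2, if_neg h3, if_neg hac]
      ring
  · have ha2 : (a : ℕ) % 2 = 1 := Nat.odd_iff.mp ha
    have hge : 1 ≤ (a : ℕ) := by omega
    set b₀ : Fin N := ⟨N - (a : ℕ), by omega⟩ with hb₀
    have hb0v : (b₀ : ℕ) = N - (a : ℕ) := rfl
    have hsum : ∑ b, A0mat N z a b * A0mat N z b c
        = A0mat N z a b₀ * A0mat N z b₀ c := by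
      refine Finset.sum_eq_single_of_mem b₀ (Finset.mem_univ _) (fun b _ hb => ?_)
      have h1 : ¬((a : ℕ) % 2 = 0 ∧ (a : ℕ) + (b : ℕ) + 2 = N) := by omega
      have h2 : ¬((a : ℕ) % 2 = 1 ∧ (a : ℕ) + (b : ℕ) = N) := by
        rintro ⟨_, h⟩
        exact hb (Fin.ext (by omega : (b : ℕ) = (b₀ : ℕ)))
      simp only [A0mat, Matrix.of_apply]
      rw [if_neg h1, if_neg h2, zero_mul]
    rw [hsum]
    simp only [A0mat, Matrix.of_apply]
    have h1 : ¬((a : ℕ) % 2 = 0 ∧ (a : ℕ) + (b₀ : ℕ) + 2 = N) := by omega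
    have h1' : (a : ℕ) % 2 = 1 ∧ (a : ℕ) + (b₀ : ℕ) = N := ⟨ha2, by omega⟩
    rw [if_neg h1, if_pos h1']
    have hb2 : (b₀ : ℕ) % 2 = 1 := by omega
    by_cases hac : a = c
    · subst hac
      have h2 : ¬((b₀ : ℕ) % 2 = 0 ∧ (b₀ : ℕ) + (a : ℕ) + 2 = N) := by omega
      have h2' : (b₀ : ℕ) % 2 = 1 ∧ (b₀ : ℕ) + (a : ℕ) = N := ⟨hb2, by omega⟩
      rw [if_neg h2, if_pos h2', if_pos rfl]
      have := hz (a : ℕ) (b₀ : ℕ) ha2 (by omega)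
      rw [neg_mul_neg]
      simpa using this
    · have hacn : (a : ℕ) ≠ (c : ℕ) := fun h => hac (Fin.ext h)
      have h2 : ¬((b₀ : ℕ) % 2 = 0 ∧ (b₀ : ℕ) + (c : ℕ) + 2 = N) := by omega
      have h3 : ¬((b₀ : ℕ) % 2 = 1 ∧ (b₀ : ℕ) + (c : ℕ) = N) := by
        rintro ⟨_, h⟩; exact hacn (by omega)
      rw [if_neg h2, if_neg h3, if_neg hac]
      ring
end
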